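/- For Cauchy densities with scales s₁, s₂ > 0 and equal priors, the probability of error is P_e = 1 - (2/π)arctan(√λ), where λ = s₂/s₁ ≥ 1. -/

import Mathlib

open Real MeasureTheory Set

lemma integ_aux (s : ℝ) (hs : 0 < s) : Integrable fun x : ℝ => (x ^ 2 + s ^ 2)⁻¹ := by
  have h := (integrable_inv_one_add_sq.comp_div hs.ne').const_mul (s ^ 2)⁻¹
  refine h.congr (Filter.Eventually.of_forall fun x => ?_)
  field_simp
  ring

lemma intIoi (s : ℝ) (hs : 0 < s) (a : ℝ) :
    ∫ x in Ioi a, (x ^ 2 + s ^ 2)⁻¹ = (π / 2 - arctan (a / s)) / s := by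
  have h := integral_comp_mul_left_Ioi (fun x => (x ^ 2 + s ^ 2)⁻¹) (a / s) hs
  rw [mul_div_cancel₀ _ hs.ne'] at h
  have e : ∀ x : ℝ, ((s * x) ^ 2 + s ^ 2)⁻¹ = (s ^ 2)⁻¹ * (1 + x ^ 2)⁻¹ := by
    intro x; field_simp; ring
  simp only [e] at h
  rw [integral_const_mul, integral_Ioi_inv_one_add_sq] at h
  rw [smul_eq_mul] at h
  field_simp at h ⊢
  nlinarith [hs, sq_nonneg s]

lemma intIoc (s : ℝ) (hs : 0 < s) (a b : ℝ) (hab : a ≤ b) :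
    ∫ x in Ioc a b, (x ^ 2 + s ^ 2)⁻¹ = (arctan (b / s) - arctan (a / s)) / s := by
  rw [← intervalIntegral.integral_of_le hab]
  have e : ∀ x : ℝ, (x ^ 2 + s ^ 2)⁻¹ = (s ^ 2)⁻¹ * (1 + (x / s) ^ 2)⁻¹ := by
    intro x; field_simp; ring
  rw [intervalIntegral.integral_congr (g := fun x => (s ^ 2)⁻¹ * (1 + (x / s) ^ 2)⁻¹)
    (fun x _ => e x)]
  rw [intervalIntegral.integral_const_mul]
  rw [intervalIntegral.integral_comp_div (fun x => (1 + x ^ 2)⁻¹) hs.ne']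
  rw [integral_inv_one_add_sq, smul_eq_mul]
  field_simp

theorem cauchy_prob_error (s₁ s₂ : ℝ) (hs₁ : 0 < s₁) (hs : s₁ ≤ s₂) :
    ∫ x : ℝ, min (s₁ / (π * (x ^ 2 + s₁ ^ 2)) / 2) (s₂ / (π * (x ^ 2 + s₂ ^ 2)) / 2)
      = 1 - (2 / π) * arctan (Real.sqrt (s₂ / s₁)) := by
  have hs₂ : 0 < s₂ := lt_of_lt_of_le hs₁ hs
  have hπ : 0 < π := pi_pos
  set c : ℝ := Real.sqrt (s₁ * s₂) with hc
  have hc0 : 0 ≤ c := Real.sqrt_nonneg _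
  have hc2 : c ^ 2 = s₁ * s₂ := Real.sq_sqrt (by positivity)
  set f : ℝ → ℝ := fun x =>
    min (s₁ / (π * (x ^ 2 + s₁ ^ 2)) / 2) (s₂ / (π * (x ^ 2 + s₂ ^ 2)) / 2) with hf
  -- integrability
  have hi₁ : Integrable (fun x : ℝ => s₁ / (π * (x ^ 2 + s₁ ^ 2)) / 2) := by
    refine (((integ_aux s₁ hs₁).const_mul (s₁ / (2 * π))).congr
      (Filter.Eventually.of_forall fun x => ?_))
    have : (0:ℝ) < x ^ 2 + s₁ ^ 2 := by positivity
    field_simp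
  have hi₂ : Integrable (fun x : ℝ => s₂ / (π * (x ^ 2 + s₂ ^ 2)) / 2) := by
    refine (((integ_aux s₂ hs₂).const_mul (s₂ / (2 * π))).congr
      (Filter.Eventually.of_forall fun x => ?_))
    have : (0:ℝ) < x ^ 2 + s₂ ^ 2 := by positivity
    field_simp
  have hif : Integrable f := by
    have := hi₁.inf hi₂
    exact this.congr (Filter.Eventually.of_forall fun x => rfl)
  -- pointwise identification
  have hmin₁ : ∀ x : ℝ, s₁ * s₂ ≤ x ^ 2 → f x = s₁ / (2 * π) * (x ^ 2 + s₁ ^ 2)⁻¹ := by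
    intro x hx
    have h1 : (0:ℝ) < π * (x ^ 2 + s₁ ^ 2) := by positivity
    have h2 : (0:ℝ) < π * (x ^ 2 + s₂ ^ 2) := by positivity
    have hle : s₁ / (π * (x ^ 2 + s₁ ^ 2)) ≤ s₂ / (π * (x ^ 2 + s₂ ^ 2)) := by
      rw [div_le_div_iff₀ h1 h2]
      nlinarith [mul_nonneg (mul_nonneg hπ.le (sub_nonneg.2 hs)) (sub_nonneg.2 hx)]
    have h0 : f x = s₁ / (π * (x ^ 2 + s₁ ^ 2)) / 2 := min_eq_left (by linarith)
    rw [h0]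
    field_simp
  have hmin₂ : ∀ x : ℝ, x ^ 2 ≤ s₁ * s₂ → f x = s₂ / (2 * π) * (x ^ 2 + s₂ ^ 2)⁻¹ := by
    intro x hx
    have h1 : (0:ℝ) < π * (x ^ 2 + s₁ ^ 2) := by positivity
    have h2 : (0:ℝ) < π * (x ^ 2 + s₂ ^ 2) := by positivity
    have hle : s₂ / (π * (x ^ 2 + s₂ ^ 2)) ≤ s₁ / (π * (x ^ 2 + s₁ ^ 2)) := by
      rw [div_le_div_iff₀ h2 h1]
      nlinarith [mul_nonneg (mul_nonneg hπ.le (sub_nonneg.2 hs)) (sub_nonneg.2 hx)]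
    have h0 : f x = s₂ / (π * (x ^ 2 + s₂ ^ 2)) / 2 := min_eq_right (by linarith)
    rw [h0]
    field_simp
  -- split the integral
  have hsplit : ∫ x : ℝ, f x =
      ((∫ x in Iic (-c), f x) + ∫ x in Ioc (-c) c, f x) + ∫ x in Ioi c, f x := by
    have A := intervalIntegral.integral_Iic_add_Ioi (μ := volume) (b := c) (f := f)
      hif.integrableOn hif.integrableOn
    have B := setIntegral_union (μ := volume) (f := f) (s := Iic (-c)) (t := Ioc (-c) c) (Iic_disjoint_Ioc (le_refl (-c)))
      measurableSet_Ioc hif.integrableOn hif.integrableOn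
    rw [Iic_union_Ioc_eq_Iic (neg_le_self hc0)] at B
    rw [← A, B]
  -- evaluate the three pieces
  have hIic : ∫ x in Iic (-c), f x = s₁ / (2 * π) * ((π / 2 - arctan (c / s₁)) / s₁) := by
    rw [setIntegral_congr_fun measurableSet_Iic (g := fun x => s₁ / (2 * π) * (x ^ 2 + s₁ ^ 2)⁻¹)
      (fun x hx => hmin₁ x (by nlinarith [mem_Iic.mp hx]))]
    rw [integral_const_mul, ← integral_comp_neg_Ioi]
    simp only [neg_sq]
    rw [intIoi s₁ hs₁ c]
  have hIoi : ∫ x in Ioi c, f x = s₁ / (2 * π) * ((π / 2 - arctan (c / s₁)) / s₁) := by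
    rw [setIntegral_congr_fun measurableSet_Ioi (g := fun x => s₁ / (2 * π) * (x ^ 2 + s₁ ^ 2)⁻¹)
      (fun x hx => hmin₁ x (by nlinarith [mem_Ioi.mp hx]))]
    rw [integral_const_mul, intIoi s₁ hs₁ c]
  have hIoc : ∫ x in Ioc (-c) c, f x
      = s₂ / (2 * π) * ((arctan (c / s₂) - arctan (-c / s₂)) / s₂) := by
    rw [setIntegral_congr_fun measurableSet_Ioc (g := fun x => s₂ / (2 * π) * (x ^ 2 + s₂ ^ 2)⁻¹)
      (fun x hx => hmin₂ x (by
        obtain ⟨h1, h2⟩ := mem_Ioc.mp hx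
        nlinarith))]
    rw [integral_const_mul, intIoc s₂ hs₂ (-c) c (by linarith)]
  -- arctan identities
  have e₁ : c / s₁ = Real.sqrt (s₂ / s₁) := by
    rw [hc, show s₂ / s₁ = (s₁ * s₂) / s₁ ^ 2 by field_simp,
      Real.sqrt_div (by positivity), Real.sqrt_sq hs₁.le]
  have e₂ : c / s₂ = Real.sqrt (s₁ / s₂) := by
    rw [hc, show s₁ / s₂ = (s₁ * s₂) / s₂ ^ 2 by field_simp,
      Real.sqrt_div (by positivity), Real.sqrt_sq hs₂.le]
  have e₃ : arctan (Real.sqrt (s₁ / s₂)) = π / 2 - arctan (Real.sqrt (s₂ / s₁)) := by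
    rw [show Real.sqrt (s₁ / s₂) = (Real.sqrt (s₂ / s₁))⁻¹ by
        rw [← Real.sqrt_inv, inv_div]]
    exact arctan_inv_of_pos (Real.sqrt_pos.2 (by positivity))
  rw [hsplit, hIic, hIoc, hIoi, e₁, neg_div, arctan_neg, e₂, e₃]
  field_simp
  ring
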